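/- Let f be differentiable on an open interval containing [a,b] with a < b, and let q > 1 with conjugate exponent p (1/p + 1/q = 1). If |f'|^q is convex on [a,b], then |f((a+b)/2) - (1/(b-a)) ∫_a^b f(u) du| ≤ ((b-a)/16)(4/(p+1))^{1/p} [ (3|f'(a)|^q + |f'(b)|^q)^{1/q} + (3|f'(b)|^q + |f'(a)|^q)^{1/q} ]. -/

import Mathlib

open MeasureTheory intervalIntegral Set

lemma intInt_of_bound (α β : ℝ) (g : ℝ → ℝ)
    (hm : AEStronglyMeasurable g (volume.restrict (Set.uIoc α β)))
    (C : ℝ) (hb : ∀ x ∈ Set.uIoc α β, |g x| ≤ C) : IntervalIntegrable g volume α β := by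
  rw [intervalIntegrable_iff]
  haveI : IsFiniteMeasure (volume.restrict (Set.uIoc α β)) := by
    rw [Set.uIoc]; infer_instance
  exact Integrable.mono' (integrable_const C) hm
    ((ae_restrict_iff' measurableSet_uIoc).2 (Filter.Eventually.of_forall fun x hx => by
      simpa [Real.norm_eq_abs] using hb x hx))

lemma holder_seg {α β p q : ℝ} (hαβ : α ≤ β) (hpq : Real.HolderConjugate p q) {F G : ℝ → ℝ}
    (hFm : AEStronglyMeasurable F (volume.restrict (Set.Ioc α β)))
    (hGm : AEStronglyMeasurable G (volume.restrict (Set.Ioc α β)))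
    {CF CG : ℝ} (hFb : ∀ x ∈ Set.Ioc α β, |F x| ≤ CF) (hGb : ∀ x ∈ Set.Ioc α β, |G x| ≤ CG)
    (hF0 : ∀ x ∈ Set.Ioc α β, 0 ≤ F x) (hG0 : ∀ x ∈ Set.Ioc α β, 0 ≤ G x) :
    ∫ x in α..β, F x * G x ≤
      (∫ x in α..β, F x ^ p) ^ (1/p) * (∫ x in α..β, G x ^ q) ^ (1/q) := by
  rw [intervalIntegral.integral_of_le hαβ, intervalIntegral.integral_of_le hαβ,
    intervalIntegral.integral_of_le hαβ]
  haveI : IsFiniteMeasure (volume.restrict (Set.Ioc α β)) := by infer_instance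
  have aeF0 : 0 ≤ᵐ[volume.restrict (Set.Ioc α β)] F :=
    (ae_restrict_iff' measurableSet_Ioc).2 (Filter.Eventually.of_forall hF0)
  have aeG0 : 0 ≤ᵐ[volume.restrict (Set.Ioc α β)] G :=
    (ae_restrict_iff' measurableSet_Ioc).2 (Filter.Eventually.of_forall hG0)
  exact MeasureTheory.integral_mul_le_Lp_mul_Lq_of_nonneg hpq aeF0 aeG0
    (MemLp.of_bound hFm CF ((ae_restrict_iff' measurableSet_Ioc).2
      (Filter.Eventually.of_forall fun x hx => by simpa [Real.norm_eq_abs] using hFb x hx)))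
    (MemLp.of_bound hGm CG ((ae_restrict_iff' measurableSet_Ioc).2
      (Filter.Eventually.of_forall fun x hx => by simpa [Real.norm_eq_abs] using hGb x hx)))
open Real

lemma const_eq {r p q : ℝ} (hr : 0 < r) (hp : 1 < p) (hpq : 1/p + 1/q = 1) :
    (1/r) * (((r/2) ^ (p+1) / (p+1)) ^ (1/p) * (r/8) ^ (1/q)) =
      r/16 * (4/(p+1)) ^ (1/p) := by
  have hp0 : 0 < p := by linarith
  have hp1 : 0 < p + 1 := by linarith
  have hr2 : 0 < r/2 := by linarith
  have hr8 : 0 < r/8 := by linarith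
  have hq1 : 1/q = 1 - 1/p := by linarith
  have e1 : (r/8) ^ (1/q) = (r/8) / (r/8) ^ (1/p) := by
    rw [hq1, Real.rpow_sub hr8, Real.rpow_one]
  have e2 : ((r/2) ^ (p+1) / (p+1)) ^ (1/p)
      = (r/2) * (r/2) ^ (1/p) / (p+1) ^ (1/p) := by
    rw [Real.div_rpow (Real.rpow_nonneg hr2.le _) hp1.le, ← Real.rpow_mul hr2.le,
      show (p+1) * (1/p) = 1 + 1/p by field_simp, Real.rpow_add hr2, Real.rpow_one]
  have e3 : (4:ℝ) ^ (1/p) = (r/2) ^ (1/p) / (r/8) ^ (1/p) := by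
    rw [← Real.div_rpow hr2.le hr8.le, show (r/2)/(r/8) = 4 by field_simp; ring]
  have e4 : (4/(p+1) : ℝ) ^ (1/p) = 4 ^ (1/p) / (p+1) ^ (1/p) :=
    Real.div_rpow (by norm_num) hp1.le _
  rw [e1, e2, e4, e3]
  have h1 : (r/2 : ℝ) ^ (1/p) ≠ 0 := (Real.rpow_pos_of_pos hr2 _).ne'
  have h2 : (r/8 : ℝ) ^ (1/p) ≠ 0 := (Real.rpow_pos_of_pos hr8 _).ne'
  have h3 : (p+1 : ℝ) ^ (1/p) ≠ 0 := (Real.rpow_pos_of_pos hp1 _).ne'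
  field_simp
  ring

open MeasureTheory intervalIntegral Set

set_option maxHeartbeats 2000000 in
theorem kirmaci_holder
    (a b c d p q : ℝ) (f f' : ℝ → ℝ) (hab : a < b)
    (hsub : Icc a b ⊆ Ioo c d)
    (hf : ∀ x ∈ Ioo c d, HasDerivAt f (f' x) x)
    (hq : 1 < q) (hpq : 1 / p + 1 / q = 1)
    (hconv : ∀ x ∈ Icc a b, ∀ y ∈ Icc a b, ∀ t ∈ Icc (0:ℝ) 1,
      |f' (t * x + (1 - t) * y)| ^ q ≤ t * |f' x| ^ q + (1 - t) * |f' y| ^ q) :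
    |f ((a + b) / 2) - (1 / (b - a)) * ∫ u in a..b, f u| ≤
      ((b - a) / 16) * (4 / (p + 1)) ^ (1 / p) *
        ((3 * |f' a| ^ q + |f' b| ^ q) ^ (1 / q) +
         (3 * |f' b| ^ q + |f' a| ^ q) ^ (1 / q)) := by
  have hba : (0:ℝ) < b - a := sub_pos.2 hab
  set m : ℝ := (a + b) / 2 with hmdef
  have ham : a < m := by simp only [hmdef]; linarith
  have hmb : m < b := by simp only [hmdef]; linarith
  have hq0 : 0 < q := by linarith
  have h1q : 0 < 1/q := by positivity
  have h1q' : 1/q < 1 := (div_lt_one hq0).2 hq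
  have h1p : 0 < 1/p := by linarith
  have hp0 : 0 < p := one_div_pos.mp h1p
  have hp1 : 1 < p := by
    rw [← one_div_one_div p]
    rw [lt_div_iff₀ h1p]; linarith
  have hcj : Real.HolderConjugate p q := Real.holderConjugate_iff.mpr ⟨hp1, by rw [← one_div, ← one_div]; exact hpq⟩
  set A : ℝ := |f' a| ^ q with hAdef
  set B : ℝ := |f' b| ^ q with hBdef
  have hA0 : 0 ≤ A := Real.rpow_nonneg (abs_nonneg _) _
  have hB0 : 0 ≤ B := Real.rpow_nonneg (abs_nonneg _) _
  -- pointwise convexity bound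
  have hptw : ∀ u ∈ Icc a b, |f' u| ^ q ≤ ((b - u) * A + (u - a) * B) / (b - a) := by
    intro u hu
    obtain ⟨hua, hub⟩ := hu
    have ht0 : 0 ≤ (b - u) / (b - a) := div_nonneg (by linarith) hba.le
    have ht1 : (b - u) / (b - a) ≤ 1 := by
      rw [div_le_one hba]; linarith
    have := hconv a (left_mem_Icc.2 hab.le) b (right_mem_Icc.2 hab.le)
      ((b - u)/(b - a)) ⟨ht0, ht1⟩
    have hx : (b - u)/(b - a) * a + (1 - (b - u)/(b - a)) * b = u := by
      field_simp; ring
    rw [hx] at this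
    calc |f' u| ^ q ≤ (b-u)/(b-a) * A + (1 - (b-u)/(b-a)) * B := this
      _ = ((b - u) * A + (u - a) * B) / (b - a) := by field_simp; ring
  -- global bound on |f'|
  have hbdd : ∀ u ∈ Icc a b, |f' u| ≤ (A + B) ^ (1/q) := by
    intro u hu
    have h1 : |f' u| ^ q ≤ A + B := by
      have := hptw u hu
      have h2 : ((b - u) * A + (u - a) * B) / (b - a) ≤ A + B := by
        rw [div_le_iff₀ hba]
        nlinarith [hu.1, hu.2, mul_nonneg (sub_nonneg.2 hu.1) hB0,
          mul_nonneg (sub_nonneg.2 hu.2) hA0]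
      linarith
    calc |f' u| = (|f' u| ^ q) ^ (1/q) := by
          rw [← Real.rpow_mul (abs_nonneg _), mul_one_div, div_self hq0.ne',
            Real.rpow_one]
      _ ≤ (A + B) ^ (1/q) :=
          Real.rpow_le_rpow (Real.rpow_nonneg (abs_nonneg _) _) h1 h1q.le
  -- f' agrees with deriv f on Icc a b, so it's a.e. strongly measurable there
  have hf'eq : ∀ x ∈ Icc a b, f' x = deriv f x := fun x hx =>
    ((hf x (hsub hx)).deriv).symm
  have hmeasf' : ∀ s : Set ℝ, MeasurableSet s → s ⊆ Icc a b →
      AEStronglyMeasurable f' (volume.restrict s) := by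
    intro s hsm hss
    refine (measurable_deriv f).aestronglyMeasurable.congr ?_
    exact (ae_restrict_iff' hsm).2 (Filter.Eventually.of_forall fun x hx =>
      (hf'eq x (hss hx)).symm)
  -- subset helpers
  have hIam : Set.Icc a m ⊆ Icc a b := Icc_subset_Icc le_rfl hmb.le
  have hImb : Set.Icc m b ⊆ Icc a b := Icc_subset_Icc ham.le le_rfl
  have hUam : Set.uIcc a m ⊆ Icc a b := by rw [Set.uIcc_of_le ham.le]; exact hIam
  have hUmb : Set.uIcc m b ⊆ Icc a b := by rw [Set.uIcc_of_le hmb.le]; exact hImb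
  have hOam : Set.Ioc a m ⊆ Icc a b := fun x hx => hIam ⟨hx.1.le, hx.2⟩
  have hOmb : Set.Ioc m b ⊆ Icc a b := fun x hx => hImb ⟨hx.1.le, hx.2⟩
  -- integrability of f' on the two halves
  have hintf1 : IntervalIntegrable f' volume a m := by
    refine intInt_of_bound a m f' ?_ ((A+B)^(1/q)) ?_
    · rw [Set.uIoc_of_le ham.le]
      exact hmeasf' _ measurableSet_Ioc hOam
    · intro x hx; rw [Set.uIoc_of_le ham.le] at hx; exact hbdd x (hOam hx)
  have hintf2 : IntervalIntegrable f' volume m b := by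
    refine intInt_of_bound m b f' ?_ ((A+B)^(1/q)) ?_
    · rw [Set.uIoc_of_le hmb.le]
      exact hmeasf' _ measurableSet_Ioc hOmb
    · intro x hx; rw [Set.uIoc_of_le hmb.le] at hx; exact hbdd x (hOmb hx)
  -- continuity and integrability of f
  have hfc : ContinuousOn f (Icc a b) := fun x hx =>
    ((hf x (hsub hx)).continuousAt).continuousWithinAt
  have hfint1 : IntervalIntegrable f volume a m := (hfc.mono hUam).intervalIntegrable
  have hfint2 : IntervalIntegrable f volume m b := (hfc.mono hUmb).intervalIntegrable
  -- integration by parts on both halves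
  have ibp1 : ∫ x in a..m, (x - a) * f' x = (m - a) * f m - ∫ x in a..m, f x := by
    have h := intervalIntegral.integral_mul_deriv_eq_deriv_mul
      (u := fun x => x - a) (v := f) (u' := fun _ => (1:ℝ)) (v' := f')
      (fun x _ => (hasDerivAt_id x).sub_const a)
      (fun x hx => hf x (hsub (hUam hx)))
      intervalIntegrable_const hintf1
    simp only [sub_self, zero_mul, sub_zero, one_mul] at h
    rw [h]
  have ibp2 : ∫ x in m..b, (x - b) * f' x = (b - m) * f m - ∫ x in m..b, f x := by
    have h := intervalIntegral.integral_mul_deriv_eq_deriv_mul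
      (u := fun x => x - b) (v := f) (u' := fun _ => (1:ℝ)) (v' := f')
      (fun x _ => (hasDerivAt_id x).sub_const b)
      (fun x hx => hf x (hsub (hUmb hx)))
      intervalIntegrable_const hintf2
    simp only [sub_self, zero_mul, zero_sub, one_mul] at h
    rw [h]; ring
  have hsplit : (∫ x in a..m, f x) + ∫ x in m..b, f x = ∫ x in a..b, f x :=
    intervalIntegral.integral_add_adjacent_intervals hfint1 hfint2
  have key : f m - (1/(b-a)) * ∫ u in a..b, f u
      = (1/(b-a)) * ((∫ x in a..m, (x - a) * f' x) + ∫ x in m..b, (x - b) * f' x) := by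
    rw [ibp1, ibp2, ← hsplit]
    field_simp
    ring
  -- abs bounds
  have habs1 : |∫ x in a..m, (x - a) * f' x| ≤ ∫ x in a..m, (x - a) * |f' x| := by
    refine le_trans (intervalIntegral.abs_integral_le_integral_abs ham.le) (le_of_eq ?_)
    apply intervalIntegral.integral_congr
    intro x hx
    rw [Set.uIcc_of_le ham.le] at hx
    simp only [abs_mul, abs_of_nonneg (sub_nonneg.2 hx.1)]
  have habs2 : |∫ x in m..b, (x - b) * f' x| ≤ ∫ x in m..b, (b - x) * |f' x| := by
    refine le_trans (intervalIntegral.abs_integral_le_integral_abs hmb.le) (le_of_eq ?_)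
    apply intervalIntegral.integral_congr
    intro x hx
    rw [Set.uIcc_of_le hmb.le] at hx
    simp only [abs_mul]
    rw [abs_sub_comm, abs_of_nonneg (sub_nonneg.2 hx.2)]
  -- measurability of |f'| on halves
  have hmeasabs : ∀ s : Set ℝ, MeasurableSet s → s ⊆ Icc a b →
      AEStronglyMeasurable (fun x => |f' x|) (volume.restrict s) := by
    intro s hsm hss
    refine ((measurable_deriv f).norm.aestronglyMeasurable).congr ?_
    exact (ae_restrict_iff' hsm).2 (Filter.Eventually.of_forall fun x hx => by
      simp only [Real.norm_eq_abs, hf'eq x (hss hx)])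
  -- Hölder on both halves
  have hold1 : ∫ x in a..m, (x - a) * |f' x| ≤
      (∫ x in a..m, (x - a) ^ p) ^ (1/p) * (∫ x in a..m, |f' x| ^ q) ^ (1/q) := by
    refine holder_seg (F := fun x => x - a) (G := fun x => |f' x|) ham.le hcj
      ((continuous_id.sub continuous_const).aestronglyMeasurable)
      (hmeasabs _ measurableSet_Ioc hOam)
      (CF := m - a) (CG := (A+B)^(1/q)) ?_ ?_ ?_ ?_
    · intro x hx; rw [abs_of_nonneg (sub_nonneg.2 hx.1.le)]; linarith [hx.2]
    · intro x hx; rw [abs_abs]; exact hbdd x (hOam hx)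
    · intro x hx; show (0:ℝ) ≤ x - a; linarith [hx.1]
    · intro x _; exact abs_nonneg _
  have hold2 : ∫ x in m..b, (b - x) * |f' x| ≤
      (∫ x in m..b, (b - x) ^ p) ^ (1/p) * (∫ x in m..b, |f' x| ^ q) ^ (1/q) := by
    refine holder_seg (F := fun x => b - x) (G := fun x => |f' x|) hmb.le hcj
      ((continuous_const.sub continuous_id).aestronglyMeasurable)
      (hmeasabs _ measurableSet_Ioc hOmb)
      (CF := b - m) (CG := (A+B)^(1/q)) ?_ ?_ ?_ ?_
    · intro x hx; rw [abs_of_nonneg (sub_nonneg.2 hx.2)]; linarith [hx.1]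
    · intro x hx; rw [abs_abs]; exact hbdd x (hOmb hx)
    · intro x hx; show (0:ℝ) ≤ b - x; linarith [hx.2]
    · intro x _; exact abs_nonneg _
  -- the power integrals
  have P1 : ∫ x in a..m, (x - a) ^ p = ((b-a)/2) ^ (p+1) / (p+1) := by
    have h1 : ∫ x in a..m, (x - a) ^ p = ∫ y in (0:ℝ)..(m - a), y ^ p := by
      simpa using intervalIntegral.integral_comp_sub_right (a := a) (b := m)
        (fun y => y ^ p) a
    rw [h1, integral_rpow (Or.inl (by linarith : (-1:ℝ) < p)),
      Real.zero_rpow (by linarith : p + 1 ≠ 0),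
      show m - a = (b-a)/2 by rw [hmdef]; ring]
    ring
  have P2 : ∫ x in m..b, (b - x) ^ p = ((b-a)/2) ^ (p+1) / (p+1) := by
    have h1 : ∫ x in m..b, (b - x) ^ p = ∫ y in (0:ℝ)..(b - m), y ^ p := by
      simpa using intervalIntegral.integral_comp_sub_left (a := m) (b := b)
        (fun y => y ^ p) b
    rw [h1, integral_rpow (Or.inl (by linarith : (-1:ℝ) < p)),
      Real.zero_rpow (by linarith : p + 1 ≠ 0),
      show b - m = (b-a)/2 by rw [hmdef]; ring]
    ring
  -- integrability of |f'|^q on halves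
  have hintq1 : IntervalIntegrable (fun x => |f' x| ^ q) volume a m := by
    refine intInt_of_bound a m _ ?_ (A + B) ?_
    · rw [Set.uIoc_of_le ham.le]
      exact (Real.continuous_rpow_const hq0.le).comp_aestronglyMeasurable
        (hmeasabs _ measurableSet_Ioc hOam)
    · intro x hx
      rw [Set.uIoc_of_le ham.le] at hx
      rw [abs_of_nonneg (Real.rpow_nonneg (abs_nonneg _) _)]
      have h2 := hptw x (hOam hx)
      have h3 : ((b - x) * A + (x - a) * B) / (b - a) ≤ A + B := by
        rw [div_le_iff₀ hba]
        have hx1 := (hOam hx).1; have hx2 := (hOam hx).2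
        nlinarith [mul_nonneg (sub_nonneg.2 hx1) hB0, mul_nonneg (sub_nonneg.2 hx2) hA0]
      linarith
  have hintq2 : IntervalIntegrable (fun x => |f' x| ^ q) volume m b := by
    refine intInt_of_bound m b _ ?_ (A + B) ?_
    · rw [Set.uIoc_of_le hmb.le]
      exact (Real.continuous_rpow_const hq0.le).comp_aestronglyMeasurable
        (hmeasabs _ measurableSet_Ioc hOmb)
    · intro x hx
      rw [Set.uIoc_of_le hmb.le] at hx
      rw [abs_of_nonneg (Real.rpow_nonneg (abs_nonneg _) _)]
      have h2 := hptw x (hOmb hx)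
      have h3 : ((b - x) * A + (x - a) * B) / (b - a) ≤ A + B := by
        rw [div_le_iff₀ hba]
        have hx1 := (hOmb hx).1; have hx2 := (hOmb hx).2
        nlinarith [mul_nonneg (sub_nonneg.2 hx1) hB0, mul_nonneg (sub_nonneg.2 hx2) hA0]
      linarith
  -- bounds on the q-integrals via convexity
  have hLcont : Continuous (fun x : ℝ => ((b - x) * A + (x - a) * B) / (b - a)) := by
    fun_prop
  have hLeq : ∀ x : ℝ, ((b - x) * A + (x - a) * B) / (b - a) =
      (b*A - a*B)/(b-a) + ((B - A)/(b-a)) * x := by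
    intro x; field_simp; ring
  have Q1 : ∫ x in a..m, |f' x| ^ q ≤ (b - a) / 8 * (3*A + B) := by
    have mono := intervalIntegral.integral_mono_on ham.le hintq1
      (hLcont.intervalIntegrable a m)
      (fun x hx => hptw x (hIam hx))
    have comp : ∫ x in a..m, ((b - x) * A + (x - a) * B) / (b - a)
        = (b - a) / 8 * (3*A + B) := by
      simp_rw [hLeq]
      rw [integral_add intervalIntegrable_const
          (((intervalIntegrable_id (μ := volume)).const_mul _)),
        _root_.intervalIntegral.integral_const, intervalIntegral.integral_const_mul,
        integral_id, hmdef, smul_eq_mul]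
      field_simp
      ring
    linarith
  have Q2 : ∫ x in m..b, |f' x| ^ q ≤ (b - a) / 8 * (3*B + A) := by
    have mono := intervalIntegral.integral_mono_on hmb.le hintq2
      (hLcont.intervalIntegrable m b)
      (fun x hx => hptw x (hImb hx))
    have comp : ∫ x in m..b, ((b - x) * A + (x - a) * B) / (b - a)
        = (b - a) / 8 * (3*B + A) := by
      simp_rw [hLeq]
      rw [integral_add intervalIntegrable_const
          (((intervalIntegrable_id (μ := volume)).const_mul _)),
        _root_.intervalIntegral.integral_const, intervalIntegral.integral_const_mul,
        integral_id, hmdef, smul_eq_mul]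
      field_simp
      ring
    linarith
  -- assemble
  set K : ℝ := (((b-a)/2) ^ (p+1) / (p+1)) ^ (1/p) with hKdef
  have hK0 : 0 ≤ K := Real.rpow_nonneg (by positivity) _
  have hq1nn : 0 ≤ ∫ x in a..m, |f' x| ^ q :=
    intervalIntegral.integral_nonneg ham.le
      (fun x _ => Real.rpow_nonneg (abs_nonneg _) _)
  have hq2nn : 0 ≤ ∫ x in m..b, |f' x| ^ q :=
    intervalIntegral.integral_nonneg hmb.le
      (fun x _ => Real.rpow_nonneg (abs_nonneg _) _)
  have hJ1 : |∫ x in a..m, (x - a) * f' x| ≤ K * ((b-a)/8 * (3*A+B)) ^ (1/q) := by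
    refine le_trans habs1 (le_trans hold1 ?_)
    rw [P1]
    exact mul_le_mul_of_nonneg_left
      (Real.rpow_le_rpow hq1nn Q1 h1q.le) hK0
  have hJ2 : |∫ x in m..b, (x - b) * f' x| ≤ K * ((b-a)/8 * (3*B+A)) ^ (1/q) := by
    refine le_trans habs2 (le_trans hold2 ?_)
    rw [P2]
    exact mul_le_mul_of_nonneg_left
      (Real.rpow_le_rpow hq2nn Q2 h1q.le) hK0
  have final : |f m - (1/(b-a)) * ∫ u in a..b, f u| ≤ (1/(b-a)) *
      (K * ((b-a)/8 * (3*A+B)) ^ (1/q) + K * ((b-a)/8 * (3*B+A)) ^ (1/q)) := by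
    rw [key, abs_mul, abs_of_pos (by positivity : (0:ℝ) < 1/(b-a))]
    exact mul_le_mul_of_nonneg_left
      (le_trans (abs_add_le _ _) (add_le_add hJ1 hJ2)) (by positivity)
  refine le_trans final (le_of_eq ?_)
  have e1 : ((b-a)/8 * (3*A+B)) ^ (1/q) = ((b-a)/8) ^ (1/q) * (3*A+B) ^ (1/q) :=
    Real.mul_rpow (by positivity) (by positivity)
  have e2 : ((b-a)/8 * (3*B+A)) ^ (1/q) = ((b-a)/8) ^ (1/q) * (3*B+A) ^ (1/q) :=
    Real.mul_rpow (by positivity) (by positivity)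
  have hconst := const_eq hba hp1 hpq
  rw [e1, e2, hKdef]
  rw [show (1/(b-a)) * ((((b-a)/2) ^ (p+1)/(p+1)) ^ (1/p) * (((b-a)/8) ^ (1/q) * (3*A+B) ^ (1/q))
        + (((b-a)/2) ^ (p+1)/(p+1)) ^ (1/p) * (((b-a)/8) ^ (1/q) * (3*B+A) ^ (1/q)))
      = ((1/(b-a)) * ((((b-a)/2) ^ (p+1)/(p+1)) ^ (1/p) * ((b-a)/8) ^ (1/q)))
        * ((3*A+B) ^ (1/q) + (3*B+A) ^ (1/q)) by ring, hconst]
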